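/- Assume D is nonexpansive (λ = 1). Then G = ∇g + τ(I − D) is (1/(L+2τ))-cocoercive: for all x, y ∈ E, ⟨G(x) − G(y), x − y⟩ ≥ (1/(L+2τ))·‖G(x) − G(y)‖². -/

import Mathlib

open scoped RealInnerProductSpace

variable {E : Type*} [NormedAddCommGroup E] [InnerProductSpace ℝ E] [CompleteSpace E]

lemma line_hasDerivAt (g : E → ℝ) (g' : E → E)
    (hgrad : ∀ x, HasGradientAt g (g' x) x) (x v : E) (t : ℝ) :
    HasDerivAt (fun s : ℝ => g (x + s • v)) ⟪g' (x + t • v), v⟫ t := by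
  have h1 : HasDerivAt (fun s : ℝ => x + s • v) v t := by
    simpa using ((hasDerivAt_id t).smul_const v).const_add x
  have h2 := (hasGradientAt_iff_hasFDerivAt.mp (hgrad (x + t • v))).comp_hasDerivAt t h1
  simp [InnerProductSpace.toDual_apply_apply] at h2
  exact h2

lemma grad_first_order (g : E → ℝ) (g' : E → E)
    (hconv : ConvexOn ℝ Set.univ g)
    (hgrad : ∀ x, HasGradientAt g (g' x) x) (x y : E) :
    g x + ⟪g' x, y - x⟫ ≤ g y := by
  set v := y - x with hv
  have hd : HasDerivAt (fun s : ℝ => g (x + s • v)) ⟪g' x, v⟫ 0 := by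
    simpa using line_hasDerivAt g g' hgrad x v 0
  have hslope := hasDerivAt_iff_tendsto_slope.mp hd
  have hslope' : Filter.Tendsto (slope (fun s : ℝ => g (x + s • v)) 0) (nhdsWithin 0 (Set.Ioi 0))
      (nhds ⟪g' x, v⟫) :=
    hslope.mono_left (nhdsWithin_mono 0 (fun t ht => ne_of_gt ht))
  have hev : ∀ᶠ t in nhdsWithin (0:ℝ) (Set.Ioi 0),
      slope (fun s : ℝ => g (x + s • v)) 0 t ≤ g y - g x := by
    filter_upwards [Ioc_mem_nhdsGT one_pos] with t ht
    have hcvx : g ((1 - t) • x + t • y) ≤ (1 - t) * g x + t * g y :=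
      hconv.2 (Set.mem_univ x) (Set.mem_univ y)
        (by linarith [ht.2]) (le_of_lt ht.1) (by ring)
    have hxt : x + t • v = (1 - t) • x + t • y := by
      rw [hv]; module
    have : g (x + t • v) ≤ (1 - t) * g x + t * g y := by rw [hxt]; exact hcvx
    have ht0 : (0:ℝ) < t := ht.1
    rw [slope_def_field]
    simp only [zero_smul, add_zero, sub_zero]
    rw [div_le_iff₀ ht0]
    nlinarith
  have := le_of_tendsto hslope' hev
  linarith

lemma descent_lemma (g : E → ℝ) (g' : E → E) (L : ℝ) (hL : 0 < L)
    (hgrad : ∀ x, HasGradientAt g (g' x) x)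
    (hgLip : ∀ x y, ‖g' x - g' y‖ ≤ L * ‖x - y‖) (x v : E) :
    g (x + v) ≤ g x + ⟪g' x, v⟫ + L / 2 * ‖v‖ ^ 2 := by
  set θ : ℝ → ℝ := fun t => g (x + t • v) - t * ⟪g' x, v⟫ - L / 2 * ‖v‖ ^ 2 * t ^ 2 with hθ
  have hder : ∀ t : ℝ, HasDerivAt θ
      (⟪g' (x + t • v) - g' x, v⟫ - L * ‖v‖ ^ 2 * t) t := by
    intro t
    have h1 := line_hasDerivAt g g' hgrad x v t
    have h2 : HasDerivAt (fun t : ℝ => t * ⟪g' x, v⟫) ⟪g' x, v⟫ t := by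
      simpa using (hasDerivAt_id t).mul_const ⟪g' x, v⟫
    have h3 : HasDerivAt (fun t : ℝ => L / 2 * ‖v‖ ^ 2 * t ^ 2)
        (L / 2 * ‖v‖ ^ 2 * (2 * t)) t := by
      simpa using (hasDerivAt_pow 2 t).const_mul (L / 2 * ‖v‖ ^ 2)
    have := (h1.sub h2).sub h3
    convert this using 1
    · rfl
    · rfl
    · rfl
    rw [inner_sub_left]; ring
  have hanti : AntitoneOn θ (Set.Icc 0 1) := by
    apply antitoneOn_of_deriv_nonpos (convex_Icc 0 1)
    · exact fun t _ => ((hder t).continuousAt).continuousWithinAt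
    · intro t ht
      exact ((hder t).differentiableAt).differentiableWithinAt
    · intro t ht
      rw [interior_Icc] at ht
      rw [(hder t).deriv]
      have hcs : ⟪g' (x + t • v) - g' x, v⟫ ≤ ‖g' (x + t • v) - g' x‖ * ‖v‖ :=
        real_inner_le_norm _ _
      have hlip := hgLip (x + t • v) x
      have h4 : ‖x + t • v - x‖ = t * ‖v‖ := by
        rw [add_sub_cancel_left, norm_smul, Real.norm_eq_abs, abs_of_pos ht.1]
      rw [h4] at hlip
      nlinarith [norm_nonneg v, mul_le_mul_of_nonneg_right hlip (norm_nonneg v), ht.1.le]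
  have h01 := hanti (Set.left_mem_Icc.mpr zero_le_one) (Set.right_mem_Icc.mpr zero_le_one)
    zero_le_one
  simp only [hθ, zero_smul, add_zero, one_smul, zero_mul, zero_pow, mul_zero, sub_zero,
    one_pow, mul_one, one_mul] at h01
  linarith

lemma baillon_haddad (g : E → ℝ) (g' : E → E) (L : ℝ) (hL : 0 < L)
    (hconv : ConvexOn ℝ Set.univ g)
    (hgrad : ∀ x, HasGradientAt g (g' x) x)
    (hgLip : ∀ x y, ‖g' x - g' y‖ ≤ L * ‖x - y‖) (x y : E) :
    (1 / L) * ‖g' x - g' y‖ ^ 2 ≤ ⟪g' x - g' y, x - y⟫ := by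
  have key : ∀ a b : E, g b + ⟪g' b, a - b⟫ + 1 / (2 * L) * ‖g' a - g' b‖ ^ 2 ≤ g a := by
    intro a b
    set d := g' a - g' b with hd
    have hdesc := descent_lemma g g' L hL hgrad hgLip a (-(1 / L) • d)
    have hfo := grad_first_order g g' hconv hgrad b (a + -(1 / L) • d)
    have e1 : ⟪g' a, -(1 / L) • d⟫ = -(1 / L) * ⟪g' a, d⟫ := real_inner_smul_right _ _ _
    have e2 : ‖(-(1 / L)) • d‖ ^ 2 = (1 / L) ^ 2 * ‖d‖ ^ 2 := by
      rw [norm_smul, mul_pow, Real.norm_eq_abs]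
      congr 1
      rw [abs_neg, abs_of_pos (by positivity)]
    have e3 : ⟪g' b, a + -(1 / L) • d - b⟫ = ⟪g' b, a - b⟫ + -(1 / L) * ⟪g' b, d⟫ := by
      have : a + -(1 / L) • d - b = (a - b) + (-(1 / L)) • d := by abel
      rw [this, inner_add_right, real_inner_smul_right]
    have e4 : ⟪g' a, d⟫ - ⟪g' b, d⟫ = ‖d‖ ^ 2 := by
      rw [← inner_sub_left, ← hd, real_inner_self_eq_norm_sq]
    rw [e1, e2] at hdesc
    rw [e3] at hfo
    have hL' : L ≠ 0 := ne_of_gt hL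
    have expand : L / 2 * ((1 / L) ^ 2 * ‖d‖ ^ 2) = 1 / (2 * L) * ‖d‖ ^ 2 := by
      field_simp
    rw [expand] at hdesc
    have e5 : (1 / L) * ⟪g' a, d⟫ - (1 / L) * ⟪g' b, d⟫ = (1 / L) * ‖d‖ ^ 2 := by
      rw [← mul_sub, e4]
    have e6 : (1 / L) * ‖d‖ ^ 2 - 1 / (2 * L) * ‖d‖ ^ 2 = 1 / (2 * L) * ‖d‖ ^ 2 := by
      field_simp; ring
    linarith
  have k1 := key x y
  have k2 := key y x
  have hsym : ‖g' y - g' x‖ = ‖g' x - g' y‖ := norm_sub_rev _ _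
  rw [hsym] at k2
  have e7 : ⟪g' x, y - x⟫ = -⟪g' x, x - y⟫ := by
    rw [← inner_neg_right]; congr 1; abel
  have e8 : ⟪g' x - g' y, x - y⟫ = ⟪g' x, x - y⟫ - ⟪g' y, x - y⟫ := inner_sub_left _ _ _
  rw [e7] at k2
  have h2L : 1 / L * ‖g' x - g' y‖ ^ 2 = 2 * (1 / (2 * L) * ‖g' x - g' y‖ ^ 2) := by
    field_simp
  linarith


/-- Proposition 1: for a nonexpansive prior `D`, the operator
`G = ∇g + τ(I − D)` is `(1/(L+2τ))`-cocoercive. -/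
theorem G_cocoercive {n : ℕ}
    (g : EuclideanSpace ℝ (Fin n) → ℝ)
    (g' D G : EuclideanSpace ℝ (Fin n) → EuclideanSpace ℝ (Fin n))
    (L τ : ℝ)
    (hL : 0 < L)
    (hgconv : ConvexOn ℝ Set.univ g)
    (hgrad : ∀ x, HasGradientAt g (g' x) x)
    (hgLip : ∀ x y, ‖g' x - g' y‖ ≤ L * ‖x - y‖)
    (hD : ∀ x y, ‖D x - D y‖ ≤ ‖x - y‖)
    (hτ : 0 < τ)
    (hG : ∀ x, G x = g' x + τ • (x - D x)) :
    ∀ x y : EuclideanSpace ℝ (Fin n),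
      ⟪G x - G y, x - y⟫ ≥ (1 / (L + 2 * τ)) * ‖G x - G y‖ ^ 2 := by
  intro x y
  set a := g' x - g' y with ha
  set w := (x - D x) - (y - D y) with hw
  set u := x - y with hu
  have hGxy : G x - G y = a + τ • w := by
    rw [hG x, hG y, ha, hw]; module
  have hLτ : (0:ℝ) < L + 2 * τ := by linarith
  have s1 := baillon_haddad g g' L hL hgconv hgrad hgLip x y
  have s1' : ‖a‖ ^ 2 ≤ L * ⟪a, u⟫ := by
    rw [one_div, inv_mul_le_iff₀ hL] at s1
    exact s1
  have hm : ‖D x - D y‖ ≤ ‖u‖ := hD x y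
  have s2' : ‖w‖ ^ 2 ≤ 2 * ⟪w, u⟫ := by
    have hwu : w = u - (D x - D y) := by rw [hw, hu]; abel
    set m := D x - D y with hmm
    have e1 : ⟪w, u⟫ = ‖u‖ ^ 2 - ⟪m, u⟫ := by
      rw [hwu, inner_sub_left, real_inner_self_eq_norm_sq]
    have e2 : ‖w‖ ^ 2 = ‖u‖ ^ 2 - 2 * ⟪u, m⟫ + ‖m‖ ^ 2 := by
      rw [hwu]; exact norm_sub_sq_real u m
    have e3 : ⟪m, u⟫ = ⟪u, m⟫ := real_inner_comm _ _
    nlinarith [hm, norm_nonneg u, norm_nonneg m]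
  have s3 : ⟪a, w⟫ ≤ ‖a‖ * ‖w‖ := real_inner_le_norm a w
  have eN : ‖a + τ • w‖ ^ 2 = ‖a‖ ^ 2 + 2 * τ * ⟪a, w⟫ + τ ^ 2 * ‖w‖ ^ 2 := by
    rw [norm_add_sq_real, real_inner_smul_right, norm_smul, mul_pow, Real.norm_eq_abs,
      abs_of_pos hτ]
    ring
  have eZ : ⟪a + τ • w, u⟫ = ⟪a, u⟫ + τ * ⟪w, u⟫ := by
    rw [inner_add_left, real_inner_smul_left]
  rw [hGxy, eN, eZ, ge_iff_le, one_div, inv_mul_le_iff₀ hLτ]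
  nlinarith [mul_le_mul_of_nonneg_left s1' hLτ.le,
    mul_le_mul_of_nonneg_left s2' (by positivity : (0:ℝ) ≤ L * τ * (L + 2 * τ) / 2),
    mul_le_mul_of_nonneg_left s3 (by positivity : (0:ℝ) ≤ L * τ),
    mul_nonneg hτ.le (sq_nonneg (2 * ‖a‖ - L * ‖w‖)), hL, hτ]
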